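/- Let a ≠ 0 be constant, f(u) = u, and suppose g : I → ℝ (with 0 ∉ I, 1 − ġ² > 0) satisfies κ ≡ a constant and the marginally trapped condition. Then g satisfies the ODE u·g̈ + ġ − ġ³ = ε·a·(1 − ġ²)^{3/2} for some ε ∈ {1, −1}. -/

import Mathlib

private lemma rpow_three_halves {x : ℝ} (hx : 0 < x) :
    x ^ ((3 : ℝ) / 2) = x * Real.sqrt x := by
  rw [show x * Real.sqrt x = x ^ (1:ℝ) * x ^ ((1:ℝ)/2) from by
    rw [Real.rpow_one, Real.sqrt_eq_rpow], ← Real.rpow_add hx]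
  norm_num

/-- If the meridian surface M′_m with f(u) = u has constant spherical curvature κ ≡ a ≠ 0
and is marginally trapped, then g satisfies u·g̈ + ġ − ġ³ = ε·a·(1 − ġ²)^{3/2}
for some ε ∈ {1, −1}. -/
theorem stmt_6 (a : ℝ) (ha : a ≠ 0) (I : Set ℝ) (hI : IsOpen I) (hIconn : IsConnected I)
    (h0 : (0 : ℝ) ∉ I) (g g' g'' : ℝ → ℝ)
    (hg : ∀ u ∈ I, HasDerivAt g (g' u) u)
    (hg' : ∀ u ∈ I, HasDerivAt g' (g'' u) u)
    (hg''cont : ContinuousOn g'' I)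
    (hreg : ∀ u ∈ I, 0 < 1 - g' u ^ 2)
    (κm : ℝ → ℝ) (hκm : ∀ u ∈ I, κm u = g'' u / (1 - g' u ^ 2) ^ ((3 : ℝ) / 2))
    -- the marginally trapped condition κ² = (κ_m f √(1−ġ²) + ġ)²/(1−ġ²) with κ ≡ a, f = u :
    (hmt : ∀ u ∈ I, a ^ 2 =
      (κm u * u * Real.sqrt (1 - g' u ^ 2) + g' u) ^ 2 / (1 - g' u ^ 2)) :
    ∃ ε : ℝ, (ε = 1 ∨ ε = -1) ∧ ∀ u ∈ I,
      u * g'' u + g' u - g' u ^ 3 = ε * a * (1 - g' u ^ 2) ^ ((3 : ℝ) / 2) := by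
  set x : ℝ → ℝ := fun u => 1 - g' u ^ 2 with hxdef
  set s : ℝ → ℝ := fun u => (u * g'' u + g' u * x u) / (x u * Real.sqrt (x u)) with hsdef
  have hg'cont : ContinuousOn g' I := fun u hu => (hg' u hu).continuousAt.continuousWithinAt
  have hxcont : ContinuousOn x I := continuousOn_const.sub (hg'cont.pow 2)
  have hscont : ContinuousOn s I := by
    apply ContinuousOn.div
    · exact (continuousOn_id.mul hg''cont).add (hg'cont.mul hxcont)
    · exact hxcont.mul hxcont.sqrt
    · intro u hu
      exact (mul_pos (hreg u hu) (Real.sqrt_pos.mpr (hreg u hu))).ne'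
  -- pointwise: s u = a ∨ s u = -a
  have hkey : ∀ u ∈ I, s u = a ∨ s u = -a := by
    intro u hu
    have hxpos : 0 < x u := hreg u hu
    have hsq : 0 < Real.sqrt (x u) := Real.sqrt_pos.mpr hxpos
    have h1 : κm u * u * Real.sqrt (x u) = u * g'' u / x u := by
      rw [hκm u hu]
      rw [show (1 - g' u ^ 2 : ℝ) = x u from rfl, rpow_three_halves hxpos]
      field_simp
    have h2 := hmt u hu
    rw [show (1 - g' u ^ 2 : ℝ) = x u from rfl] at h2
    rw [h1] at h2
    have h2'' : u * g'' u / x u + g' u = (u * g'' u + g' u * x u) / x u := by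
      field_simp
    have h3 : s u ^ 2 = a ^ 2 := by
      rw [hsdef, h2, h2'']
      simp only [div_pow, mul_pow, Real.sq_sqrt hxpos.le, div_div]
    rcases sq_eq_sq_iff_eq_or_eq_neg.mp h3 with h | h
    · exact Or.inl h
    · exact Or.inr h
  -- constant sign by connectedness
  have habs : 0 < |a| := abs_pos.mpr ha
  set A : Set ℝ := I ∩ s ⁻¹' Metric.ball a |a| with hAdef
  set B : Set ℝ := I ∩ s ⁻¹' Metric.ball (-a) |a| with hBdef
  have hAopen : IsOpen A := hscont.isOpen_inter_preimage hI Metric.isOpen_ball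
  have hBopen : IsOpen B := hscont.isOpen_inter_preimage hI Metric.isOpen_ball
  have hmemA : ∀ u ∈ I, s u = a → u ∈ A := by
    intro u hu hsu
    exact ⟨hu, by simp [Metric.mem_ball, hsu, habs]⟩
  have hmemB : ∀ u ∈ I, s u = -a → u ∈ B := by
    intro u hu hsu
    exact ⟨hu, by simp [Metric.mem_ball, hsu, habs]⟩
  have hcover : I ⊆ A ∪ B := by
    intro u hu
    rcases hkey u hu with h | h
    · exact Or.inl (hmemA u hu h)
    · exact Or.inr (hmemB u hu h)
  have hdisj : ∀ u ∈ I, ¬ (u ∈ A ∧ u ∈ B) := by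
    rintro u hu ⟨⟨_, hA⟩, ⟨_, hB⟩⟩
    rw [Set.mem_preimage, Metric.mem_ball, Real.dist_eq] at hA hB
    rcases hkey u hu with h | h
    · rw [h] at hB
      rw [show a - -a = 2 * a by ring, abs_mul] at hB
      simp at hB; nlinarith [abs_pos.mpr ha]
    · rw [h] at hA
      rw [show -a - a = -(2 * a) by ring, abs_neg, abs_mul] at hA
      simp at hA; nlinarith [abs_pos.mpr ha]
  -- one of A ∩ I, B ∩ I is all of I
  have hconst : (∀ u ∈ I, s u = a) ∨ (∀ u ∈ I, s u = -a) := by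
    by_contra h
    push_neg at h
    obtain ⟨⟨u₁, hu₁, hs₁⟩, ⟨u₂, hu₂, hs₂⟩⟩ := h
    have hu₁B : u₁ ∈ B := by
      rcases hkey u₁ hu₁ with h | h
      · exact absurd h hs₁
      · exact hmemB u₁ hu₁ h
    have hu₂A : u₂ ∈ A := by
      rcases hkey u₂ hu₂ with h | h
      · exact hmemA u₂ hu₂ h
      · exact absurd h hs₂
    obtain ⟨u, huI, huA, huB⟩ := hIconn.isPreconnected A B hAopen hBopen hcover
      ⟨u₂, hu₂, hu₂A⟩ ⟨u₁, hu₁, hu₁B⟩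
    exact hdisj u huI ⟨huA, huB⟩
  -- conclude
  rcases hconst with hc | hc
  · refine ⟨1, Or.inl rfl, fun u hu => ?_⟩
    have hxpos : 0 < x u := hreg u hu
    have hsq : 0 < Real.sqrt (x u) := Real.sqrt_pos.mpr hxpos
    have hx' : x u = 1 - g' u ^ 2 := rfl
    have heq : u * g'' u + g' u * x u = a * (x u * Real.sqrt (x u)) :=
      (div_eq_iff (mul_pos hxpos hsq).ne').mp (hc u hu)
    rw [show (1 - g' u ^ 2 : ℝ) = x u from rfl, rpow_three_halves hxpos]
    linear_combination heq - g' u * hx'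
  · refine ⟨-1, Or.inr rfl, fun u hu => ?_⟩
    have hxpos : 0 < x u := hreg u hu
    have hsq : 0 < Real.sqrt (x u) := Real.sqrt_pos.mpr hxpos
    have hx' : x u = 1 - g' u ^ 2 := rfl
    have heq : u * g'' u + g' u * x u = -a * (x u * Real.sqrt (x u)) :=
      (div_eq_iff (mul_pos hxpos hsq).ne').mp (hc u hu)
    rw [show (1 - g' u ^ 2 : ℝ) = x u from rfl, rpow_three_halves hxpos]
    linear_combination heq - g' u * hx'
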